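/- Let $h(x) = \sum_{i} x_i \log x_i$ on the product of scaled simplices $\mathcal{X} = \prod_{k=1}^{K} \Delta_{m_k} \subseteq \mathbb{R}^N$, with $m_{\max} = \max_k m_k$. Then $h$ is $\frac{1}{K m_{\max}}$-strongly convex on $\mathcal{X}$ with respect to the $\ell^1$ norm: for all $x, y \in \mathcal{X}$ and $\lambda \in [0,1]$, $h(\lambda x + (1-\lambda) y) \le \lambda h(x) + (1-\lambda) h(y) - \frac{\lambda(1-\lambda)}{2 K m_{\max}} \|x - y\|_1^2$. -/

import Mathlib

open Finset

lemma key0 (t : ℝ) (ht : 0 ≤ t) :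
    3 * (t - 1) ^ 2 ≤ 2 * (t + 2) * (t * Real.log t - t + 1) := by
  rcases eq_or_lt_of_le ht with h | h
  · simp [← h]; norm_num [Real.log_zero]
  set g : ℝ → ℝ := fun s => (2 * s ^ 2 + 4 * s) * Real.log s - (5 * s ^ 2 - 4 * s - 1)
    with hgdef
  set g1 : ℝ → ℝ := fun s => (4 * s + 4) * Real.log s - (8 * s - 8) with hg1def
  have hderiv_g : ∀ s : ℝ, 0 < s → HasDerivAt g (g1 s) s := by
    intro s hs
    have hp : HasDerivAt (fun u : ℝ => 2 * u ^ 2 + 4 * u) (4 * s + 4) s := by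
      have h1 := ((hasDerivAt_pow 2 s).const_mul (2:ℝ)).add ((hasDerivAt_id s).const_mul 4)
      refine h1.congr_deriv ?_
      push_cast; ring
    have hq : HasDerivAt (fun u : ℝ => 5 * u ^ 2 - 4 * u - 1) (10 * s - 4) s := by
      have h1 := (((hasDerivAt_pow 2 s).const_mul (5:ℝ)).sub
        ((hasDerivAt_id s).const_mul 4)).sub_const 1
      refine h1.congr_deriv ?_
      push_cast; ring
    have hlog : HasDerivAt Real.log s⁻¹ s := Real.hasDerivAt_log (ne_of_gt hs)
    have h2 := (hp.mul hlog).sub hq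
    refine h2.congr_deriv ?_
    rw [hg1def]
    have hs' : s ≠ 0 := ne_of_gt hs
    field_simp
    ring
  have hderiv_g1 : ∀ s : ℝ, 0 < s → HasDerivAt g1 (4 * Real.log s + 4 / s - 4) s := by
    intro s hs
    have hp : HasDerivAt (fun u : ℝ => 4 * u + 4) 4 s := by
      have h1 := ((hasDerivAt_id s).const_mul (4:ℝ)).add_const (4:ℝ)
      refine h1.congr_deriv ?_
      ring
    have hq : HasDerivAt (fun u : ℝ => 8 * u - 8) 8 s := by
      have h1 := ((hasDerivAt_id s).const_mul (8:ℝ)).sub_const (8:ℝ)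
      refine h1.congr_deriv ?_
      ring
    have hlog : HasDerivAt Real.log s⁻¹ s := Real.hasDerivAt_log (ne_of_gt hs)
    have h2 := (hp.mul hlog).sub hq
    refine h2.congr_deriv ?_
    have hs' : s ≠ 0 := ne_of_gt hs
    field_simp
    ring
  have hg1mono : MonotoneOn g1 (Set.Ioi (0:ℝ)) := by
    apply monotoneOn_of_deriv_nonneg (convex_Ioi 0)
    · intro s hs
      exact (hderiv_g1 s hs).continuousAt.continuousWithinAt
    · intro s hs
      rw [interior_Ioi] at hs
      exact (hderiv_g1 s hs).differentiableAt.differentiableWithinAt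
    · intro s hs
      rw [interior_Ioi] at hs
      rw [(hderiv_g1 s hs).deriv]
      have h1 := Real.one_sub_inv_le_log_of_pos hs
      have h2 : 4 / s = 4 * s⁻¹ := by ring
      nlinarith
  have hg1_one : g1 1 = 0 := by norm_num [hg1def, Real.log_one]
  have hgcont : Continuous g := by
    have hge : g = fun s => (2 * s + 4) * (s * Real.log s) - (5 * s ^ 2 - 4 * s - 1) := by
      funext s; rw [hgdef]; ring
    rw [hge]
    fun_prop
  have hg_one : g 1 = 0 := by norm_num [hgdef, Real.log_one]
  have hg_nonneg : 0 ≤ g t := by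
    rcases le_total t 1 with hle | hle
    · have hanti : AntitoneOn g (Set.Icc (0:ℝ) 1) := by
        apply antitoneOn_of_deriv_nonpos (convex_Icc 0 1) hgcont.continuousOn
        · intro s hs
          rw [interior_Icc] at hs
          exact (hderiv_g s hs.1).differentiableAt.differentiableWithinAt
        · intro s hs
          rw [interior_Icc] at hs
          rw [(hderiv_g s hs.1).deriv]
          have h1 := hg1mono (Set.mem_Ioi.2 hs.1) (Set.mem_Ioi.2 one_pos) (le_of_lt hs.2)
          rw [hg1_one] at h1
          exact h1
      have h1 := hanti (Set.mem_Icc.2 ⟨le_of_lt h, hle⟩)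
        (Set.mem_Icc.2 ⟨zero_le_one, le_refl 1⟩) hle
      rw [hg_one] at h1
      exact h1
    · have hmono : MonotoneOn g (Set.Ici (1:ℝ)) := by
        apply monotoneOn_of_deriv_nonneg (convex_Ici 1) hgcont.continuousOn
        · intro s hs
          rw [interior_Ici] at hs
          exact (hderiv_g s (lt_trans one_pos hs)).differentiableAt.differentiableWithinAt
        · intro s hs
          rw [interior_Ici] at hs
          rw [(hderiv_g s (lt_trans one_pos hs)).deriv]
          have h1 := hg1mono (Set.mem_Ioi.2 one_pos)
            (Set.mem_Ioi.2 (lt_trans one_pos hs)) (le_of_lt hs)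
          rw [hg1_one] at h1
          exact h1
      have h1 := hmono (Set.mem_Ici.2 (le_refl 1)) (Set.mem_Ici.2 hle) hle
      rw [hg_one] at h1
      exact h1
  have hexp : g t = 2 * (t + 2) * (t * Real.log t - t + 1) - 3 * (t - 1) ^ 2 := by
    rw [hgdef]; ring
  linarith [hexp ▸ hg_nonneg]

lemma keyA (u v : ℝ) (hu : 0 ≤ u) (hv : 0 < v) :
    3 * (u - v) ^ 2 / (2 * (u + 2 * v)) ≤ u * Real.log u - u * Real.log v - u + v := by
  have hden : 0 < 2 * (u + 2 * v) := by linarith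
  rw [div_le_iff₀ hden]
  have h0 := key0 (u / v) (by positivity)
  have hlog : (u / v) * Real.log (u / v) = (u * Real.log u - u * Real.log v) / v := by
    rcases eq_or_lt_of_le hu with h | h
    · simp [← h]
    · rw [Real.log_div (ne_of_gt h) (ne_of_gt hv)]
      field_simp
  rw [hlog] at h0
  have h1 := mul_le_mul_of_nonneg_right h0 (sq_nonneg v)
  have hv' : v ≠ 0 := ne_of_gt hv
  have hL : 3 * (u / v - 1) ^ 2 * v ^ 2 = 3 * (u - v) ^ 2 := by
    field_simp
  have hR : 2 * (u / v + 2) * ((u * Real.log u - u * Real.log v) / v - u / v + 1) * v ^ 2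
      = (u * Real.log u - u * Real.log v - u + v) * (2 * (u + 2 * v)) := by
    field_simp
  rw [hL, hR] at h1
  exact h1

lemma key_nonneg (u v : ℝ) (hu : 0 ≤ u) (hv : 0 ≤ v) (huv : v = 0 → u = 0) :
    0 ≤ u * Real.log u - u * Real.log v - u + v := by
  rcases eq_or_lt_of_le hv with h | h
  · rw [huv h.symm, ← h]; simp
  · refine le_trans ?_ (keyA u v hu h)
    positivity

/-- Scaled Pinsker-type inequality via Cauchy–Schwarz. -/
lemma pinsker {ι : Type*} [Fintype ι] (u v : ι → ℝ) (hu : ∀ i, 0 ≤ u i) (hv : ∀ i, 0 ≤ v i)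
    (huv : ∀ i, v i = 0 → u i = 0) :
    (∑ i, |u i - v i|) ^ 2
      ≤ 2 / 3 * (∑ i, (u i + 2 * v i))
          * ∑ i, (u i * Real.log (u i) - u i * Real.log (v i) - u i + v i) := by
  set w : ι → ℝ := fun i => u i + 2 * v i with hw
  have hw0 : ∀ i, 0 ≤ w i := fun i => by have := hu i; have := hv i; simp [hw]; linarith
  have hcs := Finset.sum_mul_sq_le_sq_mul_sq Finset.univ
    (fun i => |u i - v i| / Real.sqrt (w i)) (fun i => Real.sqrt (w i))
  have heq1 : ∀ i, |u i - v i| / Real.sqrt (w i) * Real.sqrt (w i) = |u i - v i| := by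
    intro i
    rcases eq_or_lt_of_le (hw0 i) with h | h
    · have hvz : v i = 0 := by have := hu i; have := hv i; simp [hw] at h; linarith
      have huz : u i = 0 := huv i hvz
      simp [huz, hvz]
    · rw [div_mul_cancel₀]
      exact Real.sqrt_ne_zero'.2 h
  have heq2 : ∀ i, (|u i - v i| / Real.sqrt (w i)) ^ 2 = (u i - v i) ^ 2 / w i := by
    intro i
    rw [div_pow, sq_abs, Real.sq_sqrt (hw0 i)]
  have heq3 : ∀ i, (Real.sqrt (w i)) ^ 2 = w i := fun i => Real.sq_sqrt (hw0 i)
  rw [Finset.sum_congr rfl (fun i _ => heq1 i)] at hcs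
  rw [Finset.sum_congr rfl (fun i _ => heq2 i), Finset.sum_congr rfl (fun i _ => heq3 i)] at hcs
  have hterm : ∀ i, (u i - v i) ^ 2 / w i
      ≤ 2 / 3 * (u i * Real.log (u i) - u i * Real.log (v i) - u i + v i) := by
    intro i
    rcases eq_or_lt_of_le (hv i) with h | h
    · have hvz : v i = 0 := h.symm
      have huz : u i = 0 := huv i hvz
      simp [huz, hvz, hw]
    · have h1 := keyA (u i) (v i) (hu i) h
      have hui := hu i
      have hwpos : 0 < u i + 2 * v i := by linarith
      have h2 : (u i - v i) ^ 2 / (u i + 2 * v i)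
          = 2 / 3 * (3 * (u i - v i) ^ 2 / (2 * (u i + 2 * v i))) := by
        field_simp
      show (u i - v i) ^ 2 / (u i + 2 * v i)
          ≤ 2 / 3 * (u i * Real.log (u i) - u i * Real.log (v i) - u i + v i)
      rw [h2]
      linarith [h1]
  have hsum : ∑ i, (u i - v i) ^ 2 / w i
      ≤ 2 / 3 * ∑ i, (u i * Real.log (u i) - u i * Real.log (v i) - u i + v i) := by
    rw [Finset.mul_sum]
    exact Finset.sum_le_sum (fun i _ => hterm i)
  calc (∑ i, |u i - v i|) ^ 2 ≤ (∑ i, (u i - v i) ^ 2 / w i) * ∑ i, w i := hcs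
    _ ≤ (2 / 3 * ∑ i, (u i * Real.log (u i) - u i * Real.log (v i) - u i + v i)) * ∑ i, w i := by
        apply mul_le_mul_of_nonneg_right hsum
        exact Finset.sum_nonneg fun i _ => hw0 i
    _ = 2 / 3 * (∑ i, (u i + 2 * v i))
          * ∑ i, (u i * Real.log (u i) - u i * Real.log (v i) - u i + v i) := by
        rw [hw]; ring

/-- Strong convexity of the negative entropy `h x = ∑ i, x i * log (x i)` on a product of
scaled simplices, w.r.t. the `ℓ¹` norm, with modulus `1 / (K m_max)`: coordinates are
indexed by a finite type `ι`, partitioned into `K` blocks by `blk : ι → Fin K`; points of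
`𝒳` are nonnegative and have block sums `m k`; `m_max = max_k m k`. -/
theorem negEntropy_strongly_convex_on_simplex_product
    {ι : Type*} [Fintype ι] [DecidableEq ι] (K : ℕ) (hK : 0 < K)
    (blk : ι → Fin K) (m : Fin K → ℝ) (hm : ∀ k, 0 < m k)
    (hne : (Finset.univ : Finset (Fin K)).Nonempty)
    (x y : ι → ℝ)
    (hx0 : ∀ i, 0 ≤ x i) (hy0 : ∀ i, 0 ≤ y i)
    (hx : ∀ k, ∑ i ∈ Finset.univ.filter (fun i => blk i = k), x i = m k)
    (hy : ∀ k, ∑ i ∈ Finset.univ.filter (fun i => blk i = k), y i = m k)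
    (lam : ℝ) (hl0 : 0 ≤ lam) (hl1 : lam ≤ 1) :
    ∑ i, (lam * x i + (1 - lam) * y i) * Real.log (lam * x i + (1 - lam) * y i)
      ≤ lam * ∑ i, x i * Real.log (x i) + (1 - lam) * ∑ i, y i * Real.log (y i)
        - lam * (1 - lam) / (2 * K * Finset.univ.sup' hne m)
            * (∑ i, |x i - y i|) ^ 2 := by
  rcases eq_or_lt_of_le hl0 with h0 | h0
  · rw [← h0]; norm_num
  rcases eq_or_lt_of_le hl1 with h1 | h1
  · rw [h1]; norm_num
  have hl1' : 0 < 1 - lam := by linarith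
  set z : ι → ℝ := fun i => lam * x i + (1 - lam) * y i with hz
  have hz0 : ∀ i, 0 ≤ z i := fun i => by
    have := hx0 i; have := hy0 i
    have : 0 ≤ lam * x i := mul_nonneg hl0 (hx0 i)
    have : 0 ≤ (1 - lam) * y i := mul_nonneg (le_of_lt hl1') (hy0 i)
    simp only [hz]; linarith
  set M : ℝ := ∑ k, m k with hM
  have hMx : ∑ i, x i = M := by
    rw [hM, ← Finset.sum_fiberwise Finset.univ blk x]
    exact Finset.sum_congr rfl fun k _ => hx k
  have hMy : ∑ i, y i = M := by
    rw [hM, ← Finset.sum_fiberwise Finset.univ blk y]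
    exact Finset.sum_congr rfl fun k _ => hy k
  have hMz : ∑ i, z i = M := by
    simp only [hz]
    rw [Finset.sum_add_distrib, ← Finset.mul_sum, ← Finset.mul_sum, hMx, hMy]
    ring
  have hMpos : 0 < M := Finset.sum_pos (fun k _ => hm k) hne
  have hsup : ∀ k, m k ≤ Finset.univ.sup' hne m := fun k => Finset.le_sup' m (Finset.mem_univ k)
  have k0 : Fin K := ⟨0, hK⟩
  have hsup_pos : 0 < Finset.univ.sup' hne m := lt_of_lt_of_le (hm k0) (hsup k0)
  have hMle : M ≤ (K : ℝ) * Finset.univ.sup' hne m := by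
    have h := Finset.sum_le_card_nsmul Finset.univ m (Finset.univ.sup' hne m)
      (fun k _ => hsup k)
    simpa [Finset.card_univ, nsmul_eq_mul] using h
  set Dx : ℝ := ∑ i, (x i * Real.log (x i) - x i * Real.log (z i) - x i + z i) with hDx
  set Dy : ℝ := ∑ i, (y i * Real.log (y i) - y i * Real.log (z i) - y i + z i) with hDy
  have hgap : lam * ∑ i, x i * Real.log (x i) + (1 - lam) * ∑ i, y i * Real.log (y i)
      - ∑ i, z i * Real.log (z i) = lam * Dx + (1 - lam) * Dy := by
    rw [hDx, hDy, Finset.mul_sum, Finset.mul_sum, Finset.mul_sum, Finset.mul_sum,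
      ← Finset.sum_add_distrib, ← Finset.sum_sub_distrib, ← Finset.sum_add_distrib]
    exact Finset.sum_congr rfl fun i _ => by simp only [hz]; ring
  have hzx : ∀ i, z i = 0 → x i = 0 := by
    intro i hzi
    simp only [hz] at hzi
    have h1 : 0 ≤ lam * x i := mul_nonneg hl0 (hx0 i)
    have h2 : 0 ≤ (1 - lam) * y i := mul_nonneg (le_of_lt hl1') (hy0 i)
    have h3 : lam * x i = 0 := by linarith
    rcases mul_eq_zero.1 h3 with h | h
    · exact absurd h (ne_of_gt h0)
    · exact h
  have hzy : ∀ i, z i = 0 → y i = 0 := by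
    intro i hzi
    simp only [hz] at hzi
    have h1 : 0 ≤ lam * x i := mul_nonneg hl0 (hx0 i)
    have h2 : 0 ≤ (1 - lam) * y i := mul_nonneg (le_of_lt hl1') (hy0 i)
    have h3 : (1 - lam) * y i = 0 := by linarith
    rcases mul_eq_zero.1 h3 with h | h
    · exact absurd h (ne_of_gt hl1')
    · exact h
  have hPx := pinsker x z hx0 hz0 hzx
  have hPy := pinsker y z hy0 hz0 hzy
  have hsx : ∑ i, (x i + 2 * z i) = 3 * M := by
    rw [Finset.sum_add_distrib, ← Finset.mul_sum, hMx, hMz]; ring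
  have hsy : ∑ i, (y i + 2 * z i) = 3 * M := by
    rw [Finset.sum_add_distrib, ← Finset.mul_sum, hMy, hMz]; ring
  set S : ℝ := ∑ i, |x i - y i| with hS
  have habs_x : ∑ i, |x i - z i| = (1 - lam) * S := by
    rw [hS, Finset.mul_sum]
    refine Finset.sum_congr rfl fun i _ => ?_
    simp only [hz]
    rw [show x i - (lam * x i + (1 - lam) * y i) = (1 - lam) * (x i - y i) by ring,
      abs_mul, abs_of_pos hl1']
  have habs_y : ∑ i, |y i - z i| = lam * S := by
    rw [hS, Finset.mul_sum]
    refine Finset.sum_congr rfl fun i _ => ?_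
    simp only [hz]
    rw [show y i - (lam * x i + (1 - lam) * y i) = lam * (y i - x i) by ring,
      abs_mul, abs_of_pos h0, abs_sub_comm]
  have hPx' : ((1 - lam) * S) ^ 2 ≤ 2 * M * Dx := by
    rw [← habs_x]
    calc (∑ i, |x i - z i|) ^ 2
        ≤ 2 / 3 * (∑ i, (x i + 2 * z i)) * Dx := hPx
      _ = 2 * M * Dx := by rw [hsx]; ring
  have hPy' : (lam * S) ^ 2 ≤ 2 * M * Dy := by
    rw [← habs_y]
    calc (∑ i, |y i - z i|) ^ 2
        ≤ 2 / 3 * (∑ i, (y i + 2 * z i)) * Dy := hPy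
      _ = 2 * M * Dy := by rw [hsy]; ring
  have hKey : lam * (1 - lam) / (2 * K * Finset.univ.sup' hne m) * S ^ 2
      ≤ lam * Dx + (1 - lam) * Dy := by
    have step1 : lam * (1 - lam) / (2 * K * Finset.univ.sup' hne m) * S ^ 2
        ≤ lam * (1 - lam) / (2 * M) * S ^ 2 := by
      apply mul_le_mul_of_nonneg_right _ (sq_nonneg S)
      apply div_le_div_of_nonneg_left (by positivity) (by positivity)
      have hK0 : (0:ℝ) < K := by exact_mod_cast hK
      linarith
    have step2 : lam * (1 - lam) / (2 * M) * S ^ 2 ≤ lam * Dx + (1 - lam) * Dy := by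
      have h1 := mul_le_mul_of_nonneg_left hPx' hl0
      have h2 := mul_le_mul_of_nonneg_left hPy' (le_of_lt hl1')
      rw [div_mul_eq_mul_div, div_le_iff₀ (by positivity : (0:ℝ) < 2 * M)]
      nlinarith [h1, h2]
    linarith
  linarith [hgap, hKey]
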